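/- Let 𝔾^≤ ⊆ 𝔾 be the set consisting of ⊥ together with all (α, β) with α ≤ 0. Then 𝔾^≤ is closed under ⊔ and +, and for all x, y ∈ 𝔾^≤: ρ (x ⊔ y) = ρ x ⊔ ρ y, ρ (x + y) = ρ x + ρ y, ρ ⊥ = ⊥, ρ (0, 0) = 0; in particular ρ is monotone on 𝔾^≤ (x ≤ y implies ρ x ≤ ρ y). -/

import Mathlib

noncomputable section

/-- The max-plus semiring `𝔾 := WithBot (ℝ ×ₗ ℝ)`. -/
abbrev MaxPlusLex : Type := WithBot (ℝ ×ₗ ℝ)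

/-- `ρ : 𝔾 → WithBot ℝ` maps `⊥` to `⊥`, `(0, β)` to `β`, and `(α, β)` with `α < 0` to `⊥`. -/
def rhoMap : MaxPlusLex → WithBot ℝ :=
  WithBot.recBotCoe ⊥ (fun v => if (ofLex v).1 = 0 then ((ofLex v).2 : WithBot ℝ) else ⊥)

/-- `𝔾^≤` : the set consisting of `⊥` together with all `(α, β)` with `α ≤ 0`. -/
def MaxPlusLexNonpos : Set MaxPlusLex :=
  {x | x = ⊥ ∨ ∃ v : ℝ ×ₗ ℝ, x = ↑v ∧ (ofLex v).1 ≤ 0}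

lemma rhoMap_coe (v : ℝ ×ₗ ℝ) :
    rhoMap ↑v = if (ofLex v).1 = 0 then ((ofLex v).2 : WithBot ℝ) else ⊥ := rfl

lemma rhoMap_mono_coe (v w : ℝ ×ₗ ℝ) (hw : (ofLex w).1 ≤ 0)
    (h : v ≤ w) : rhoMap ↑v ≤ rhoMap ↑w := by
  rw [rhoMap_coe, rhoMap_coe]
  rcases Prod.Lex.le_iff.mp h with h1 | ⟨h1, h2⟩
  · by_cases hv1 : (ofLex v).1 = 0
    · exact absurd (hv1 ▸ h1) (by linarith)
    · simp [hv1]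
  · by_cases hv1 : (ofLex v).1 = 0
    · simp [hv1, h1 ▸ hv1, h2]
    · simp [hv1]

/-- `𝔾^≤` is closed under `⊔` and `+`, and on `𝔾^≤` the map `ρ` is a
homomorphism of max-plus semirings: `ρ (x ⊔ y) = ρ x ⊔ ρ y`, `ρ (x + y) = ρ x + ρ y`,
`ρ ⊥ = ⊥`, `ρ (0, 0) = 0`; in particular `ρ` is monotone on `𝔾^≤`. -/
theorem rhoMap_semiring_hom :
    (∀ x ∈ MaxPlusLexNonpos, ∀ y ∈ MaxPlusLexNonpos, x ⊔ y ∈ MaxPlusLexNonpos) ∧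
    (∀ x ∈ MaxPlusLexNonpos, ∀ y ∈ MaxPlusLexNonpos, x + y ∈ MaxPlusLexNonpos) ∧
    (∀ x ∈ MaxPlusLexNonpos, ∀ y ∈ MaxPlusLexNonpos,
      rhoMap (x ⊔ y) = rhoMap x ⊔ rhoMap y ∧ rhoMap (x + y) = rhoMap x + rhoMap y) ∧
    rhoMap ⊥ = ⊥ ∧
    rhoMap ↑(toLex ((0 : ℝ), (0 : ℝ))) = (0 : WithBot ℝ) ∧
    (∀ x ∈ MaxPlusLexNonpos, ∀ y ∈ MaxPlusLexNonpos, x ≤ y → rhoMap x ≤ rhoMap y) := by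
  have hsup : ∀ x ∈ MaxPlusLexNonpos, ∀ y ∈ MaxPlusLexNonpos,
      rhoMap (x ⊔ y) = rhoMap x ⊔ rhoMap y := by
    rintro x (rfl | ⟨v, rfl, hv⟩) y (rfl | ⟨w, rfl, hw⟩)
    · simp
    · simp [rhoMap]
    · simp [rhoMap]
    · rw [← WithBot.coe_sup]
      rcases le_total v w with h | h
      · rw [sup_eq_right.mpr h, sup_eq_right.mpr (rhoMap_mono_coe v w hw h)]
      · rw [sup_eq_left.mpr h, sup_eq_left.mpr (rhoMap_mono_coe w v hv h)]
  refine ⟨?_, ?_, ?_, rfl, by rw [rhoMap_coe]; simp, ?_⟩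
  · rintro x (rfl | ⟨v, rfl, hv⟩) y (rfl | ⟨w, rfl, hw⟩)
    · exact Or.inl (by simp)
    · exact Or.inr ⟨w, by simp, hw⟩
    · exact Or.inr ⟨v, by simp, hv⟩
    · rw [← WithBot.coe_sup]
      rcases le_total v w with h | h
      · exact Or.inr ⟨w, by rw [sup_eq_right.mpr h], hw⟩
      · exact Or.inr ⟨v, by rw [sup_eq_left.mpr h], hv⟩
  · rintro x (rfl | ⟨v, rfl, hv⟩) y (rfl | ⟨w, rfl, hw⟩)
    · exact Or.inl (by simp)
    · exact Or.inl (by simp)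
    · exact Or.inl (by simp)
    · refine Or.inr ⟨v + w, by rw [WithBot.coe_add], ?_⟩
      have : ofLex (v + w) = ofLex v + ofLex w := rfl
      rw [this]
      exact add_nonpos hv hw
  · intro x hx y hy
    refine ⟨hsup x hx y hy, ?_⟩
    rcases hx with rfl | ⟨v, rfl, hv⟩
    · simp [rhoMap]
    rcases hy with rfl | ⟨w, rfl, hw⟩
    · simp [rhoMap]
    rw [← WithBot.coe_add, rhoMap_coe, rhoMap_coe, rhoMap_coe]
    have hadd : ofLex (v + w) = ofLex v + ofLex w := rfl
    by_cases hv1 : (ofLex v).1 = 0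
    · by_cases hw1 : (ofLex w).1 = 0
      · simp [hadd, hv1, hw1, ← WithBot.coe_add]
      · have : (ofLex (v + w)).1 ≠ 0 := by rw [hadd]; simp [Prod.fst_add, hv1]; exact hw1
        simp [this, hv1, hw1]
    · have : (ofLex (v + w)).1 ≠ 0 := by
        rw [hadd]; simp only [Prod.fst_add]
        have hvlt : (ofLex v).1 < 0 := lt_of_le_of_ne hv hv1
        intro h; linarith
      have h3 : ¬((ofLex v).1 + (ofLex w).1 = 0) := by
        have hvlt : (ofLex v).1 < 0 := lt_of_le_of_ne hv hv1
        intro h; linarith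
      simp [this, hv1, h3]
  · intro x hx y hy hxy
    have := hsup x hx y hy
    rw [sup_eq_right.mpr hxy] at this
    rw [this]
    exact le_sup_left

end
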